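/- Let G be a pro-p group, (Q,w) a division ring with a discrete non-archimedean multiplicative valuation w : Q → {p^k : k ∈ Z} ∪ {0}, and φ : F_p[[G]] → Q a continuous injective ring homomorphism (with respect to the topology on Q induced by w). Then w(φ(g)) = 1 for every g ∈ G, and for each i ≥ 0 the set G_i = {g ∈ G : w(φ(g-1)) ≤ p^{-i}} is an open normal subgroup of G, the G_i form a descending chain with trivial intersection, and G_0 = G. -/

import Mathlib

section CGA

/-- The index set of open normal subgroups of a topological group `G`. -/
def OpenNormals (G : Type) [Group G] [TopologicalSpace G] :=
  {U : Subgroup G // U.Normal ∧ IsOpen (U : Set G)}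

instance {G : Type} [Group G] [TopologicalSpace G] (U : OpenNormals G) : U.val.Normal :=
  U.2.1

variable (p : ℕ) (G : Type) [Group G] [TopologicalSpace G]

/-- The transition ring homomorphism between the group algebras of two finite quotients. -/
noncomputable def cgaTrans {U V : OpenNormals G} (h : U.val ≤ V.val) :
    MonoidAlgebra (ZMod p) (G ⧸ U.val) →+* MonoidAlgebra (ZMod p) (G ⧸ V.val) :=
  MonoidAlgebra.mapDomainRingHom (ZMod p)
    (QuotientGroup.map U.val V.val (MonoidHom.id G) (by simpa using h))

/-- The completed group algebra `F_p[[G]]` of a topological group `G`, realized as the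
subring of compatible families in the product of the group algebras of the finite
(continuous) quotients of `G`. -/
noncomputable def cgaSubring :
    Subring (Π U : OpenNormals G, MonoidAlgebra (ZMod p) (G ⧸ U.val)) where
  carrier := {x | ∀ (U V : OpenNormals G) (h : U.val ≤ V.val), cgaTrans p G h (x U) = x V}
  zero_mem' := by intro U V h; simp
  one_mem' := by intro U V h; simp
  add_mem' := by
    intro a b ha hb U V h
    simp only [Pi.add_apply, map_add, ha U V h, hb U V h]
  mul_mem' := by
    intro a b ha hb U V h
    simp only [Pi.mul_apply, map_mul, ha U V h, hb U V h]
  neg_mem' := by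
    intro a ha U V h
    simp only [Pi.neg_apply, map_neg, ha U V h]

/-- The completed group algebra `F_p[[G]]`. -/
noncomputable abbrev CompletedGroupAlgebra := ↥(cgaSubring p G)

/-- The canonical (continuous) inclusion of the group `G` into the unit group of its
completed group algebra. -/
noncomputable def ofG : G →* CompletedGroupAlgebra p G where
  toFun g := ⟨fun U => MonoidAlgebra.of (ZMod p) (G ⧸ U.val) (QuotientGroup.mk g), by
    intro U V h
    simp [cgaTrans, MonoidAlgebra.of_apply, Finsupp.mapDomain_single]⟩
  map_one' := by
    apply Subtype.ext
    funext U
    simp [MonoidAlgebra.one_def]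
  map_mul' := fun g h => by
    apply Subtype.ext
    funext U
    simp [MulMemClass.coe_mul]

/-- The distinguished open normal subgroup `⊤`. -/
def topON : OpenNormals G :=
  ⟨⊤, inferInstance, by rw [Subgroup.coe_top]; exact isOpen_univ⟩

/-- The augmentation homomorphism `F_p[[G]] → F_p`. -/
noncomputable def cgaAug : CompletedGroupAlgebra p G →+* ZMod p :=
  (((MonoidAlgebra.lift (ZMod p) (ZMod p) (G ⧸ (topON G).val)) 1).toRingHom).comp
    ((Pi.evalRingHom _ (topON G)).comp (cgaSubring p G).subtype)

/-- The chain of powers `I_G ^ k` of the augmentation ideal of `F_p[[G]]`, as additive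
subgroups. -/
noncomputable def powIG : ℕ → AddSubgroup (CompletedGroupAlgebra p G)
  | 0 => ⊤
  | (k + 1) => AddSubgroup.closure
      {y | ∃ a, cgaAug p G a = 0 ∧ ∃ b ∈ powIG k, y = a * b}

end CGA

section ProP

/-- A pro-`p` group: a profinite (compact, Hausdorff, totally disconnected) group all of whose
open normal subgroups have `p`-power index. -/
def IsProPGroup (p : ℕ) (G : Type) [Group G] [TopologicalSpace G] : Prop :=
  CompactSpace G ∧ T2Space G ∧ TotallyDisconnectedSpace G ∧
    ∀ U : Subgroup G, U.Normal → IsOpen (U : Set G) → ∃ k : ℕ, U.index = p ^ k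

/-- A topological group is topologically finitely generated. -/
def TopFG (G : Type) [Group G] [TopologicalSpace G] : Prop :=
  ∃ s : Finset G, closure ((Subgroup.closure (s : Set G) : Subgroup G) : Set G) = Set.univ

/-- `N` is a free pro-`p` group: it is a profinite group admitting a basis `ι : X → N`
converging to `1`, which generates `N` topologically and has the universal lifting property
for maps into finite `p`-groups (with their discrete topology). -/
def IsFreeProP (p : ℕ) (N : Type) [Group N] [TopologicalSpace N] : Prop :=
  CompactSpace N ∧ T2Space N ∧ TotallyDisconnectedSpace N ∧
    ∃ (X : Type) (ι : X → N),
      (∀ U : Set N, IsOpen U → (1 : N) ∈ U → {x : X | ι x ∉ U}.Finite) ∧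
      closure ((Subgroup.closure (Set.range ι) : Subgroup N) : Set N) = Set.univ ∧
      ∀ (P : Type) [Group P] [Finite P], IsPGroup p P →
        ∀ f : X → P, ∃! φ : N →* P,
          (∀ y : P, IsOpen {n : N | φ n = y}) ∧ ∀ x, φ (ι x) = f x

/-- A topological group `G` is free-by-`ℤ_p`: there is a closed normal free pro-`p`
subgroup `N` (realized as the kernel of a continuous surjection onto `ℤ_p`) with
`G / N ≅ ℤ_p`. -/
def IsFreeByZp (p : ℕ) [Fact p.Prime] (G : Type) [Group G] [TopologicalSpace G] : Prop :=
  ∃ (N : Subgroup G) (θ : G →* Multiplicative ℤ_[p]),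
    IsClosed (N : Set G) ∧ IsFreeProP p ↥N ∧ Continuous θ ∧
      Function.Surjective θ ∧ θ.ker = N

end ProP

/-- The finite-level group algebras carry the discrete topology; this induces the natural
profinite topology on the completed group algebra. -/
instance monoidAlgebraDiscreteTop {k H : Type} [Semiring k] : TopologicalSpace (MonoidAlgebra k H) := ⊥

/-- A discrete non-archimedean multiplicative valuation on a division ring `Q`, with value
group contained in `{p^k : k ∈ ℤ} ∪ {0}`. -/
def IsDiscreteValuation (p : ℕ) {Q : Type} [DivisionRing Q] (w : Q → ℝ) : Prop :=
  (∀ q, w q = 0 ↔ q = 0) ∧ w 1 = 1 ∧ (∀ a b, w (a * b) = w a * w b) ∧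
    (∀ a b, w (a + b) ≤ max (w a) (w b)) ∧ (∀ q, q ≠ 0 → ∃ k : ℤ, w q = (p : ℝ) ^ k)


section AuxCG

instance {k H : Type} [Semiring k] : DiscreteTopology (MonoidAlgebra k H) := ⟨rfl⟩

lemma coset_isOpen {G : Type} [Group G] [TopologicalSpace G] [IsTopologicalGroup G]
    (U : Subgroup G) (hU : IsOpen (U : Set G)) (c : G ⧸ U) :
    IsOpen {g : G | (QuotientGroup.mk g : G ⧸ U) = c} := by
  obtain ⟨g₀, rfl⟩ := QuotientGroup.mk_surjective c
  have h : {g : G | (QuotientGroup.mk g : G ⧸ U) = QuotientGroup.mk g₀}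
      = (fun g => g₀⁻¹ * g) ⁻¹' (U : Set G) := by
    ext g
    simp only [Set.mem_setOf_eq, Set.mem_preimage, SetLike.mem_coe]
    rw [eq_comm, QuotientGroup.eq]
  rw [h]
  exact hU.preimage (continuous_const.mul continuous_id)

lemma continuous_comp_mk {G : Type} [Group G] [TopologicalSpace G] [IsTopologicalGroup G]
    (U : Subgroup G) (hU : IsOpen (U : Set G)) {A : Type}
    [TopologicalSpace A] [DiscreteTopology A] (F : G ⧸ U → A) :
    Continuous fun g => F (QuotientGroup.mk g) := by
  rw [continuous_def]
  intro S _
  have h : (fun g : G => F (QuotientGroup.mk g)) ⁻¹' S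
      = ⋃ c : {c : G ⧸ U // F c ∈ S}, {g : G | (QuotientGroup.mk g : G ⧸ U) = c.1} := by
    ext g
    simp only [Set.mem_preimage, Set.mem_iUnion, Set.mem_setOf_eq]
    exact ⟨fun h => ⟨⟨_, h⟩, rfl⟩, fun ⟨c, hc⟩ => by rw [hc]; exact c.2⟩
  rw [h]
  exact isOpen_iUnion fun c => coset_isOpen U hU c.1

lemma continuous_ofG (p : ℕ) (G : Type) [Group G] [TopologicalSpace G] [IsTopologicalGroup G] :
    Continuous (ofG p G) := by
  apply Continuous.subtype_mk
  apply continuous_pi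
  intro U
  exact continuous_comp_mk U.1 U.2.2 (fun c => MonoidAlgebra.of (ZMod p) _ c)

end AuxCG

set_option maxHeartbeats 2000000 in
set_option synthInstance.maxHeartbeats 800000 in
/-- Let `G` be a pro-`p` group, `(Q, w)` a division ring with a discrete non-archimedean
multiplicative valuation, and `φ : F_p[[G]] → Q` a continuous injective ring homomorphism
(continuity with respect to the `w`-topology on `Q`).  Then `w (φ g) = 1` for every `g ∈ G`,
and for each `i ≥ 0` the set `G_i = {g : w (φ (g - 1)) ≤ p^(-i)}` is an open normal subgroup
of `G`; the `G_i` form a descending chain with trivial intersection and `G_0 = G`. -/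


theorem valuation_chain_of_embedding (p : ℕ) [Fact p.Prime] (G : Type) [Group G]
    [TopologicalSpace G] [IsTopologicalGroup G] (hG : IsProPGroup p G)
    (Q : Type) [DivisionRing Q] (w : Q → ℝ) (hw : IsDiscreteValuation p w)
    (φ : CompletedGroupAlgebra p G →+* Q) (hinj : Function.Injective φ)
    (hcont : ∀ r : ℝ, 0 < r → IsOpen {x : CompletedGroupAlgebra p G | w (φ x) < r}) :
    (∀ g : G, w (φ (ofG p G g)) = 1) ∧
    (∀ i : ℕ, ∃ H : Subgroup G, H.Normal ∧ IsOpen (H : Set G) ∧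
      (H : Set G) = {g : G | w (φ (ofG p G g - 1)) ≤ (p : ℝ) ^ (-(i : ℤ))}) ∧
    (∀ i : ℕ, {g : G | w (φ (ofG p G g - 1)) ≤ (p : ℝ) ^ (-(i + 1 : ℤ))} ⊆
      {g : G | w (φ (ofG p G g - 1)) ≤ (p : ℝ) ^ (-(i : ℤ))}) ∧
    (⋂ i : ℕ, {g : G | w (φ (ofG p G g - 1)) ≤ (p : ℝ) ^ (-(i : ℤ))}) = {1} ∧
    {g : G | w (φ (ofG p G g - 1)) ≤ (p : ℝ) ^ (-(0 : ℤ))} = Set.univ := by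
  obtain ⟨hzero, hone, hmul, hadd, hval⟩ := hw
  haveI : CompactSpace G := hG.1
  haveI : T2Space G := hG.2.1
  haveI : TotallyDisconnectedSpace G := hG.2.2.1
  haveI : Fact (1 < p) := ⟨(Fact.out : p.Prime).one_lt⟩
  have hp1 : (1 : ℝ) < p := by exact_mod_cast (Fact.out : p.Prime).one_lt
  have hp0 : (0 : ℝ) < p := lt_trans one_pos hp1
  -- basic valuation facts
  have wnn : ∀ q : Q, 0 ≤ w q := by
    intro q
    by_cases h : q = 0
    · rw [(hzero q).2 h]
    · obtain ⟨k, hk⟩ := hval q h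
      rw [hk]
      exact (zpow_pos hp0 k).le
  have wneg1 : w (-1 : Q) = 1 := by
    have h2 : w (-1 : Q) * w (-1 : Q) = 1 := by
      rw [← hmul]; norm_num [hone]
    have hge : 0 ≤ w (-1 : Q) := wnn _
    have hle : w (-1 : Q) ≤ 1 := by nlinarith [sq_nonneg (w (-1 : Q) - 1)]
    nlinarith
  have wneg : ∀ q : Q, w (-q) = w q := by
    intro q; rw [← neg_one_mul, hmul, wneg1, one_mul]
  have wpow : ∀ (x : Q) (n : ℕ), w (x ^ n) = (w x) ^ n := by
    intro x n
    induction n with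
    | zero => simpa using hone
    | succ n ih => rw [pow_succ, pow_succ, hmul, ih]
  have hle_iff : ∀ (q : Q) (i : ℤ), w q ≤ (p : ℝ) ^ i ↔ w q < (p : ℝ) ^ (i + 1) := by
    intro q i
    constructor
    · intro h
      exact lt_of_le_of_lt h (zpow_lt_zpow_right₀ hp1 (by omega))
    · intro h
      by_cases hq : q = 0
      · rw [(hzero q).2 hq]
        exact (zpow_pos hp0 i).le
      · obtain ⟨k, hk⟩ := hval q hq
        rw [hk] at h ⊢
        have hk' : k < i + 1 := (zpow_lt_zpow_iff_right₀ hp1).1 h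
        exact zpow_le_zpow_right₀ hp1.le (by omega)
  -- nonvanishing on group elements
  have hφ0 : ∀ x : CompletedGroupAlgebra p G, φ x ≠ 0 → w (φ x) ≠ 0 ∧ x ≠ 0 := by
    intro x hx
    exact ⟨fun h => hx ((hzero _).1 h), fun h => hx (by rw [h, map_zero])⟩
  have hg0 : ∀ g : G, φ (ofG p G g) ≠ 0 := by
    intro g h
    have h1 : φ (ofG p G g) * φ (ofG p G g⁻¹) = 1 := by
      rw [← map_mul, ← map_mul, mul_inv_cancel, map_one, map_one]
    rw [h, zero_mul] at h1
    exact zero_ne_one h1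
  -- continuity
  have hcofG := continuous_ofG p G
  have hopen : ∀ r : ℝ, 0 < r → IsOpen {g : G | w (φ (ofG p G g)) < r} := by
    intro r hr
    exact (hcont r hr).preimage hcofG
  -- boundedness via compactness
  obtain ⟨N, hN⟩ : ∃ N : ℕ, ∀ g : G, w (φ (ofG p G g)) < (p : ℝ) ^ (N : ℤ) := by
    have hcover : (Set.univ : Set G) ⊆
        ⋃ n : ℕ, {g : G | w (φ (ofG p G g)) < (p : ℝ) ^ ((n : ℕ) : ℤ)} := by
      intro g _
      obtain ⟨k, hk⟩ := hval _ (hg0 g)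
      refine Set.mem_iUnion.2 ⟨k.natAbs + 1, ?_⟩
      simp only [Set.mem_setOf_eq, hk]
      refine zpow_lt_zpow_right₀ hp1 ?_
      omega
    obtain ⟨t, ht⟩ := isCompact_univ.elim_finite_subcover _
      (fun n : ℕ => hopen _ (zpow_pos hp0 _)) hcover
    refine ⟨t.sup id, fun g => ?_⟩
    obtain ⟨n, hn, hg⟩ := Set.mem_iUnion₂.1 (ht (Set.mem_univ g))
    refine lt_of_lt_of_le hg (zpow_le_zpow_right₀ hp1.le ?_)
    exact_mod_cast Finset.le_sup (f := id) hn
  -- w(φ(g)) = 1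
  have hvle : ∀ g : G, w (φ (ofG p G g)) ≤ 1 := by
    intro g
    by_contra hgt
    push_neg at hgt
    obtain ⟨n, hn⟩ := pow_unbounded_of_one_lt ((p : ℝ) ^ (N : ℤ)) hgt
    have h2 : w (φ (ofG p G g)) ^ n < (p : ℝ) ^ (N : ℤ) := by
      calc w (φ (ofG p G g)) ^ n = w (φ (ofG p G g) ^ n) := (wpow _ _).symm
        _ = w (φ (ofG p G (g ^ n))) := by rw [← map_pow, ← map_pow]
        _ < _ := hN _
    linarith
  have hv1 : ∀ g : G, w (φ (ofG p G g)) = 1 := by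
    intro g
    have hprod : w (φ (ofG p G g)) * w (φ (ofG p G g⁻¹)) = 1 := by
      rw [← hmul, ← map_mul, ← map_mul, mul_inv_cancel, map_one, map_one, hone]
    have h1 := hvle g
    have h2 := hvle g⁻¹
    have h3 := wnn (φ (ofG p G g))
    have h4 := mul_le_mul_of_nonneg_left h2 h3
    rw [hprod, mul_one] at h4
    exact le_antisymm h1 h4
  -- algebraic identities for g ↦ φ(ofG g - 1)
  have hmulmem : ∀ (i : ℤ) (g h : G), w (φ (ofG p G g - 1)) ≤ (p : ℝ) ^ i →
      w (φ (ofG p G h - 1)) ≤ (p : ℝ) ^ i → w (φ (ofG p G (g * h) - 1)) ≤ (p : ℝ) ^ i := by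
    intro i g h hg hh
    have e : φ (ofG p G (g * h) - 1)
        = φ (ofG p G g) * φ (ofG p G h - 1) + φ (ofG p G g - 1) := by
      rw [← map_mul, ← map_add]
      congr 1
      rw [map_mul]
      noncomm_ring
    rw [e]
    refine le_trans (hadd _ _) (max_le ?_ hg)
    rw [hmul, hv1, one_mul]
    exact hh
  have hinvd : ∀ g : G, w (φ (ofG p G g⁻¹ - 1)) = w (φ (ofG p G g - 1)) := by
    intro g
    have h2 : ofG p G g⁻¹ * ofG p G g = 1 := by
      rw [← map_mul, inv_mul_cancel, map_one]
    have h1 : φ (ofG p G g⁻¹ - 1) = -(φ (ofG p G g⁻¹)) * φ (ofG p G g - 1) := by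
      rw [← map_neg, ← map_mul]
      congr 1
      rw [neg_mul, mul_sub, h2, mul_one, neg_sub]
    rw [h1, hmul, wneg, hv1, one_mul]
  have hconj : ∀ h g : G, w (φ (ofG p G (h * g * h⁻¹) - 1)) = w (φ (ofG p G g - 1)) := by
    intro h g
    have e1 : ofG p G h * ofG p G h⁻¹ = 1 := by
      rw [← map_mul, mul_inv_cancel, map_one]
    have e : ofG p G (h * g * h⁻¹) - 1 = ofG p G h * (ofG p G g - 1) * ofG p G h⁻¹ := by
      rw [map_mul, map_mul, mul_sub, mul_one, sub_mul, e1]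
    rw [e, map_mul, map_mul, hmul, hmul, hv1, hv1, one_mul, mul_one]
  have honemem : ∀ i : ℤ, w (φ (ofG p G 1 - 1)) ≤ (p : ℝ) ^ i := by
    intro i
    rw [map_one, sub_self, map_zero, (hzero 0).2 rfl]
    exact (zpow_pos hp0 i).le
  -- the subgroups
  have hsub : ∀ i : ℤ, ∃ H : Subgroup G, H.Normal ∧ IsOpen (H : Set G) ∧
      (H : Set G) = {g : G | w (φ (ofG p G g - 1)) ≤ (p : ℝ) ^ i} := by
    intro i
    refine ⟨{ carrier := {g : G | w (φ (ofG p G g - 1)) ≤ (p : ℝ) ^ i}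
              one_mem' := honemem i
              mul_mem' := fun {g} {h} hg hh => hmulmem i g h hg hh
              inv_mem' := fun {g} hg => by
                show w (φ (ofG p G g⁻¹ - 1)) ≤ (p : ℝ) ^ i
                rw [hinvd]; exact hg }, ⟨fun g hg h => ?_⟩, ?_, rfl⟩
    · show w (φ (ofG p G (h * g * h⁻¹) - 1)) ≤ (p : ℝ) ^ i
      rw [hconj]; exact hg
    · have heq : {g : G | w (φ (ofG p G g - 1)) ≤ (p : ℝ) ^ i}
          = (fun g : G => ofG p G g - 1) ⁻¹' {x | w (φ x) < (p : ℝ) ^ (i + 1)} := by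
        ext g
        exact hle_iff _ _
      show IsOpen {g : G | w (φ (ofG p G g - 1)) ≤ (p : ℝ) ^ i}
      rw [heq]
      exact (hcont _ (zpow_pos hp0 _)).preimage (hcofG.sub continuous_const)
  refine ⟨hv1, fun i => hsub _, ?_, ?_, ?_⟩
  · intro i g hg
    exact le_trans hg (zpow_le_zpow_right₀ hp1.le (by omega))
  · apply Set.Subset.antisymm
    · intro g hg
      simp only [Set.mem_iInter, Set.mem_setOf_eq] at hg
      simp only [Set.mem_singleton_iff]
      by_contra hne
      have hne' : (1 : G) ≠ g := fun h => hne h.symm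
      haveI : TotallySeparatedSpace G := loc_compact_t2_tot_disc_iff_tot_sep.mp inferInstance
      obtain ⟨W, hW, h1W, hgW⟩ := exists_isClopen_of_totally_separated hne'
      obtain ⟨H, hH⟩ := IsTopologicalGroup.exist_openNormalSubgroup_sub_clopen_nhds_of_one hW h1W
      have hgH : g ∉ H.toSubgroup := fun h => hgW (hH h)
      set U₀ : OpenNormals G := ⟨H.toSubgroup, H.isNormal', H.isOpen'⟩ with hU₀
      have hne0 : ofG p G g - 1 ≠ 0 := by
        intro h0
        have h1 : ofG p G g = 1 := by
          have := sub_eq_zero.1 h0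
          exact this
        have h2 : (ofG p G g).val U₀ = (1 : CompletedGroupAlgebra p G).val U₀ := by rw [h1]
        have h3 : MonoidAlgebra.of (ZMod p) (G ⧸ U₀.val) (QuotientGroup.mk g)
            = MonoidAlgebra.of (ZMod p) (G ⧸ U₀.val) 1 := h2
        have h4 : (QuotientGroup.mk g : G ⧸ U₀.val) = 1 :=
          (MonoidAlgebra.single_left_inj one_ne_zero).1 h3
        exact hgH ((QuotientGroup.eq_one_iff g).1 h4)
      have hφne : φ (ofG p G g - 1) ≠ 0 := by
        intro h
        exact hne0 (hinj (by rw [h, map_zero]))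
      obtain ⟨k, hk⟩ := hval _ hφne
      have hg2 := hg (k.natAbs + 1)
      rw [hk] at hg2
      have : ((k.natAbs + 1 : ℕ) : ℤ) = (k.natAbs : ℤ) + 1 := by push_cast; ring
      have hlt : (p : ℝ) ^ (-((k.natAbs + 1 : ℕ) : ℤ)) < (p : ℝ) ^ k := by
        refine zpow_lt_zpow_right₀ hp1 ?_
        omega
      linarith
    · intro g hg
      simp only [Set.mem_singleton_iff] at hg
      subst hg
      exact Set.mem_iInter.2 fun i => honemem _
  · apply Set.eq_univ_of_forall
    intro g
    show w (φ (ofG p G g - 1)) ≤ (p : ℝ) ^ (-(0 : ℤ))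
    rw [neg_zero, zpow_zero, map_sub, sub_eq_add_neg]
    refine le_trans (hadd _ _) ?_
    rw [wneg, map_one, hone, hv1]
    exact le_of_eq (max_self 1)
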